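/- For integers 0 ≤ k ≤ l, let f(x) = Σ_{i=k}^{l} x^i/i!. Then for all x ≥ 0 one has −x·(f'(x))^2 + x·f(x)·f''(x) + f(x)·f'(x) ≥ 0. -/

import Mathlib

/-- For `0 ≤ k ≤ l` let `f x = ∑_{i=k}^{l} x^i / i!`. Then for all `x ≥ 0`
one has `-x f'(x)² + x f(x) f''(x) + f(x) f'(x) ≥ 0`. -/
theorem claim1_inequality
    (k l : ℕ) (hkl : k ≤ l)
    (f : ℝ → ℝ) (hf : f = fun x => ∑ i ∈ Finset.Icc k l, x ^ i / (Nat.factorial i : ℝ)) :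
    ∀ x : ℝ, 0 ≤ x →
      0 ≤ -x * (deriv f x) ^ 2 + x * f x * deriv (deriv f) x + f x * deriv f x := by
  set I := Finset.Icc k l with hI
  -- first derivative
  have hD : ∀ y : ℝ, HasDerivAt f (∑ i ∈ I, (i : ℝ) * y ^ (i - 1) / (Nat.factorial i : ℝ)) y := by
    intro y
    rw [hf]
    exact HasDerivAt.fun_sum fun i _ => (hasDerivAt_pow i y).div_const _
  have hderiv : deriv f = fun y => ∑ i ∈ I, (i : ℝ) * y ^ (i - 1) / (Nat.factorial i : ℝ) :=
    funext fun y => (hD y).deriv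
  -- second derivative
  have hD2 : ∀ y : ℝ, HasDerivAt (deriv f)
      (∑ i ∈ I, (i : ℝ) * ((i - 1 : ℕ) : ℝ) * y ^ (i - 2) / (Nat.factorial i : ℝ)) y := by
    intro y
    rw [hderiv]
    have heq : (∑ i ∈ I, (i : ℝ) * ((i - 1 : ℕ) : ℝ) * y ^ (i - 2) / (Nat.factorial i : ℝ))
        = ∑ i ∈ I, ((i : ℝ) * (((i - 1 : ℕ) : ℝ) * y ^ (i - 1 - 1))) / (Nat.factorial i : ℝ) := by
      refine Finset.sum_congr rfl fun i _ => ?_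
      rw [Nat.sub_sub]
      ring
    rw [heq]
    exact HasDerivAt.fun_sum fun i _ =>
      (HasDerivAt.const_mul (i : ℝ) (hasDerivAt_pow (i - 1) y)).div_const _
  have hderiv2 : ∀ y : ℝ, deriv (deriv f) y
      = ∑ i ∈ I, (i : ℝ) * ((i - 1 : ℕ) : ℝ) * y ^ (i - 2) / (Nat.factorial i : ℝ) :=
    fun y => (hD2 y).deriv
  intro x hx
  rcases eq_or_lt_of_le hx with h0 | hxpos
  · -- x = 0
    subst h0
    have h1 : (0:ℝ) ≤ f 0 := by
      rw [hf]
      exact Finset.sum_nonneg fun i _ => div_nonneg (pow_nonneg le_rfl i) (by positivity)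
    have h2 : (0:ℝ) ≤ deriv f 0 := by
      rw [hderiv]
      exact Finset.sum_nonneg fun i _ => div_nonneg
        (mul_nonneg (by positivity) (pow_nonneg le_rfl _)) (by positivity)
    simpa using mul_nonneg h1 h2
  · -- x > 0
    have hx0 : x ≠ 0 := ne_of_gt hxpos
    set S : ℕ → ℝ := fun i => x ^ i / (Nat.factorial i : ℝ) with hS
    have hSnn : ∀ i, 0 ≤ S i := fun i => div_nonneg (pow_nonneg hx i) (by positivity)
    set A := ∑ i ∈ I, S i with hA
    set B := ∑ i ∈ I, (i : ℝ) * S i with hB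
    set C := ∑ i ∈ I, (i : ℝ) * ((i : ℝ) - 1) * S i with hC
    have hfx : f x = A := by rw [hf, hA]
    have hfx' : deriv f x = B / x := by
      rw [hderiv, hB, Finset.sum_div]
      refine Finset.sum_congr rfl fun i _ => ?_
      rcases i with _ | n
      · simp
      · have hfac : (((n+1).factorial : ℝ)) ≠ 0 := by positivity
        simp only [hS, Nat.add_sub_cancel, pow_succ]
        field_simp
    have hfx'' : deriv (deriv f) x = C / x ^ 2 := by
      rw [hderiv2, hC, Finset.sum_div]
      refine Finset.sum_congr rfl fun i _ => ?_
      rcases i with _ | (_ | n)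
      · simp
      · simp
      · have hfac : (((n+1+1).factorial : ℝ)) ≠ 0 := by positivity
        have h2 : n + 1 + 1 - 2 = n := by omega
        simp only [hS, h2]
        have hpow : x ^ (n + 1 + 1) = x ^ n * x ^ 2 := by ring
        rw [hpow]
        push_cast
        field_simp
        ring
    rw [hfx, hfx', hfx'']
    -- key quadratic form inequality
    set T1 := ∑ i ∈ I, ∑ j ∈ I, S i * S j * (i : ℝ) ^ 2 with hT1
    set T2 := ∑ i ∈ I, ∑ j ∈ I, S i * S j * (j : ℝ) ^ 2 with hT2
    set T3 := ∑ i ∈ I, ∑ j ∈ I, S i * S j * ((i : ℝ) * (j : ℝ)) with hT3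
    set T4 := ∑ i ∈ I, ∑ j ∈ I, S i * S j * (j : ℝ) with hT4
    have e1 : A * C = T2 - T4 := by
      rw [hA, hC, hT2, hT4, Finset.sum_mul_sum, ← Finset.sum_sub_distrib]
      refine Finset.sum_congr rfl fun i _ => ?_
      rw [← Finset.sum_sub_distrib]
      exact Finset.sum_congr rfl fun j _ => by ring
    have e2 : A * B = T4 := by
      rw [hA, hB, hT4, Finset.sum_mul_sum]
      exact Finset.sum_congr rfl fun i _ => Finset.sum_congr rfl fun j _ => by ring
    have e3 : B ^ 2 = T3 := by
      rw [sq, hB, hT3, Finset.sum_mul_sum]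
      exact Finset.sum_congr rfl fun i _ => Finset.sum_congr rfl fun j _ => by ring
    have hswap : T1 = T2 := by
      rw [hT1, hT2, Finset.sum_comm]
      exact Finset.sum_congr rfl fun i _ => Finset.sum_congr rfl fun j _ => by ring
    have hsq : 0 ≤ T1 + T2 - 2 * T3 := by
      have hsum : T1 + T2 - 2 * T3 = ∑ i ∈ I, ∑ j ∈ I, S i * S j * ((i : ℝ) - (j : ℝ)) ^ 2 := by
        rw [hT1, hT2, hT3]
        rw [← Finset.sum_add_distrib, Finset.mul_sum, ← Finset.sum_sub_distrib]
        refine Finset.sum_congr rfl fun i _ => ?_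
        rw [← Finset.sum_add_distrib, Finset.mul_sum, ← Finset.sum_sub_distrib]
        exact Finset.sum_congr rfl fun j _ => by ring
      rw [hsum]
      exact Finset.sum_nonneg fun i _ => Finset.sum_nonneg fun j _ =>
        mul_nonneg (mul_nonneg (hSnn i) (hSnn j)) (sq_nonneg _)
    have hkey : 0 ≤ A * C + A * B - B ^ 2 := by
      rw [e1, e2, e3]
      linarith [hswap, hsq]
    have hform : -x * (B / x) ^ 2 + x * A * (C / x ^ 2) + A * (B / x)
        = (A * C + A * B - B ^ 2) / x := by
      field_simp
      ring
    rw [hform]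
    exact div_nonneg hkey hx
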